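/- Let F = [[36,12],[12,6]] and consider for x = (x₁,x₂) ≠ 0 and a₀ > 0 the equation 2a₀Θ⁴ = 36x₁² + 24Θx₁x₂ + 6Θ²x₂². This equation has a unique positive solution Θ(x), and the right-hand side is positive for all Θ > 0 (i.e., 36x₁² + 24Θx₁x₂ + 6Θ²x₂² > 0 whenever (x₁,x₂) ≠ (0,0) and Θ > 0). -/
import Mathlib

private lemma key_mono (x₁ x₂ s t : ℝ) (hs : 0 < s) (hst : s < t)
    (hxx : x₁ ≠ 0 ∨ x₂ ≠ 0) :
    (36*x₁^2+24*t*x₁*x₂+6*t^2*x₂^2)*s^4 < (36*x₁^2+24*s*x₁*x₂+6*s^2*x₂^2)*t^4 := by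
  have ht : 0 < t := hs.trans hst
  have hts : 0 < t - s := sub_pos.2 hst
  have hA : 0 < 36*(t^4-s^4) := by
    have := mul_pos (mul_pos hts (by linarith : (0:ℝ) < t + s)) (by positivity : (0:ℝ) < t^2+s^2)
    nlinarith [this]
  rcases eq_or_ne x₂ 0 with h2 | h2
  · subst h2
    have h1 : x₁ ≠ 0 := hxx.resolve_right (by simp)
    have hx1 : 0 < x₁^2 := by positivity
    nlinarith [mul_pos hA hx1]
  · have hx2 : 0 < x₂^2 := by positivity
    have hD : 0 < 288*(s*t)^2*(t-s)^2*(t^4+s^4+2*s*t*(t^2+s^2)) := by positivity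
    nlinarith [mul_pos hD hx2, sq_nonneg (72*(t^4-s^4)*x₁ + 24*s*t*(t^3-s^3)*x₂), hA]

theorem stmt_19 (a₀ x₁ x₂ : ℝ) (ha₀ : 0 < a₀) (hx : (x₁, x₂) ≠ (0, 0)) :
    (∃! Θ : ℝ, 0 < Θ ∧
      2 * a₀ * Θ ^ 4 = 36 * x₁ ^ 2 + 24 * Θ * x₁ * x₂ + 6 * Θ ^ 2 * x₂ ^ 2) ∧
    ∀ Θ : ℝ, 0 < Θ → 0 < 36 * x₁ ^ 2 + 24 * Θ * x₁ * x₂ + 6 * Θ ^ 2 * x₂ ^ 2 := by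
  have hxx : x₁ ≠ 0 ∨ x₂ ≠ 0 := by
    by_contra h
    push_neg at h
    exact hx (by simp [h.1, h.2])
  -- positivity of q
  have hq : ∀ Θ : ℝ, 0 < Θ → 0 < 36 * x₁ ^ 2 + 24 * Θ * x₁ * x₂ + 6 * Θ ^ 2 * x₂ ^ 2 := by
    intro Θ hΘ
    rcases eq_or_ne x₁ 0 with h1 | h1
    · have h2 : x₂ ≠ 0 := hxx.resolve_left (by simp [h1])
      have : 0 < x₂^2 := by positivity
      subst h1
      nlinarith [mul_pos (mul_pos hΘ hΘ) this]
    · have : 0 < x₁^2 := by positivity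
      nlinarith [sq_nonneg (2*x₁ + Θ*x₂)]
  refine ⟨?_, hq⟩
  -- small ε where RHS dominates
  obtain ⟨ε, hε0, hε1, hfε⟩ : ∃ ε : ℝ, 0 < ε ∧ ε ≤ 1 ∧
      2*a₀*ε^4 < 36*x₁^2+24*ε*x₁*x₂+6*ε^2*x₂^2 := by
    rcases eq_or_ne x₁ 0 with h1 | h1
    · have h2 : x₂ ≠ 0 := hxx.resolve_left (by simp [h1])
      have hx2 : 0 < x₂^2 := by positivity
      refine ⟨min 1 (x₂^2/a₀), lt_min one_pos (by positivity), min_le_left _ _, ?_⟩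
      set ε := min 1 (x₂^2/a₀) with hεdef
      have hεp : 0 < ε := lt_min one_pos (by positivity)
      have hεle1 : ε ≤ 1 := min_le_left _ _
      have hb : a₀ * ε ≤ x₂^2 := by
        have : ε ≤ x₂^2/a₀ := min_le_right _ _
        calc a₀ * ε ≤ a₀ * (x₂^2/a₀) := by nlinarith
          _ = x₂^2 := by field_simp
      subst h1
      nlinarith [mul_pos hεp hεp, mul_pos (mul_pos hεp hεp) hεp, sq_nonneg ε,
        mul_nonneg (mul_nonneg hεp.le hεp.le) (sub_nonneg.2 hεle1)]
    · have hx1 : 0 < x₁^2 := by positivity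
      refine ⟨min 1 (3*x₁^2/a₀), lt_min one_pos (by positivity), min_le_left _ _, ?_⟩
      set ε := min 1 (3*x₁^2/a₀) with hεdef
      have hεp : 0 < ε := lt_min one_pos (by positivity)
      have hεle1 : ε ≤ 1 := min_le_left _ _
      have hb : a₀ * ε ≤ 3*x₁^2 := by
        have : ε ≤ 3*x₁^2/a₀ := min_le_right _ _
        calc a₀ * ε ≤ a₀ * (3*x₁^2/a₀) := by nlinarith
          _ = 3*x₁^2 := by field_simp
      have hε4 : ε^4 ≤ ε := by
        have h3 : ε^3 ≤ 1 := by nlinarith [mul_pos hεp hεp, mul_pos (mul_pos hεp hεp) hεp]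
        calc ε^4 = ε^3 * ε := by ring
          _ ≤ 1 * ε := by nlinarith
          _ = ε := one_mul ε
      have h2a : 2*a₀*ε^4 ≤ 2*a₀*ε := by nlinarith
      nlinarith [sq_nonneg (2*x₁ + ε*x₂)]
  -- large M where LHS dominates
  set C : ℝ := 36*x₁^2 + 24*|x₁*x₂| + 6*x₂^2 with hCdef
  set M : ℝ := max ε (max 1 ((C+1)/(2*a₀))) with hMdef
  have hM1 : (1:ℝ) ≤ M := le_trans (le_max_left _ _) (le_max_right _ _)
  have hMε : ε ≤ M := le_max_left _ _
  have hM0 : 0 < M := lt_of_lt_of_le one_pos hM1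
  have hMC : C + 1 ≤ 2*a₀*M := by
    have h1 : (C+1)/(2*a₀) ≤ M := le_trans (le_max_right _ _) (le_max_right _ _)
    have h2 : 0 < 2*a₀ := by linarith
    calc C + 1 = 2*a₀ * ((C+1)/(2*a₀)) := by field_simp
      _ ≤ 2*a₀*M := by nlinarith
  have hfM : 36*x₁^2+24*M*x₁*x₂+6*M^2*x₂^2 < 2*a₀*M^4 := by
    have habs : x₁*x₂ ≤ |x₁*x₂| := le_abs_self _
    have habs0 : 0 ≤ |x₁*x₂| := abs_nonneg _
    have hM2 : 1 ≤ M^2 := by nlinarith [mul_nonneg (sub_nonneg.2 hM1) hM0.le]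
    have hM3 : 1 ≤ M^3 := by
      nlinarith [mul_nonneg (sub_nonneg.2 hM1) (sq_nonneg M),
        mul_nonneg (sub_nonneg.2 hM1) hM0.le]
    have hM3' : 0 < M^3 := by positivity
    nlinarith [mul_le_mul_of_nonneg_left hMC hM3'.le,
      mul_nonneg (sub_nonneg.2 hM3) (sq_nonneg x₁),
      mul_nonneg (mul_nonneg (sub_nonneg.2 hM2) hM0.le) habs0,
      mul_nonneg (mul_nonneg (sub_nonneg.2 hM1) (mul_pos hM0 hM0).le) (sq_nonneg x₂),
      mul_nonneg (mul_nonneg hM0.le hM0.le) habs0]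
  -- IVT
  set f : ℝ → ℝ := fun Θ => 2*a₀*Θ^4 - (36*x₁^2+24*Θ*x₁*x₂+6*Θ^2*x₂^2) with hfdef
  have hcont : ContinuousOn f (Set.Icc ε M) := (by fun_prop : Continuous f).continuousOn
  have hmem : (0:ℝ) ∈ Set.Icc (f ε) (f M) := by
    constructor
    · simp only [hfdef]; linarith
    · simp only [hfdef]; linarith
  obtain ⟨Θ, hΘmem, hΘeq⟩ := intermediate_value_Icc hMε hcont hmem
  have hΘpos : 0 < Θ := lt_of_lt_of_le hε0 hΘmem.1
  have hΘsol : 2 * a₀ * Θ ^ 4 = 36 * x₁ ^ 2 + 24 * Θ * x₁ * x₂ + 6 * Θ ^ 2 * x₂ ^ 2 := by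
    have : f Θ = 0 := hΘeq
    simp only [hfdef] at this
    linarith
  refine ⟨Θ, ⟨hΘpos, hΘsol⟩, ?_⟩
  rintro y ⟨hy0, hysol⟩
  rcases lt_trichotomy y Θ with h | h | h
  · exfalso
    have hk := key_mono x₁ x₂ y Θ hy0 h hxx
    rw [← hΘsol, ← hysol] at hk
    nlinarith [hk]
  · exact h
  · exfalso
    have hk := key_mono x₁ x₂ Θ y hΘpos h hxx
    rw [← hΘsol, ← hysol] at hk
    nlinarith [hk]
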